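/- arXiv:1406.4222 — 5 statements merged into one kernel-verified Lean document; each statement's English description precedes it below -/
import Mathlib

section
/- There exists a random variable $X$ with positive mean and $\hat{\alpha} := \sup\{\alpha \geq 0 : \mathbb{E}[e^{-\alpha X}] \leq 1\} \in (0,\infty)$ such that $\mathbb{E}[e^{-\hat{\alpha} X}] < 1$ strictly. Concretely, the discrete random variable with $\mathbb{P}(X = -n) = n^{-2}e^{-3n-3}$ for each positive integer $n$ and $\mathbb{P}(X = 3) = 1 - \sum_{n=1}^{\infty} n^{-2}e^{-3n-3}$ satisfies $\hat{\alpha} = 3$, $\mathbb{E}[e^{-\alpha X}] < 1$ for $0 < \alpha \leq 3$, and $\mathbb{E}[e^{-\alpha X}] = +\infty$ for $\alpha > 3$. -/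
open MeasureTheory ENNReal Real Filter

variable {Ω : Type*} [MeasurableSpace Ω]

/-- `emg μ X α = 𝔼[e^{-α X}]` as a value in `[0,∞]`. -/
noncomputable def emg (μ : Measure Ω) (X : Ω → ℝ) (α : ℝ) : ℝ≥0∞ :=
  ∫⁻ ω, ENNReal.ofReal (Real.exp (-α * X ω)) ∂μ

/-- `α̂ = sup {α ≥ 0 : 𝔼[e^{-α X}] ≤ 1}` as a value in `[0,∞]`. -/
noncomputable def alphaHat (μ : Measure Ω) (X : Ω → ℝ) : ℝ≥0∞ :=
  sSup (ENNReal.ofReal '' {α : ℝ | 0 ≤ α ∧ emg μ X α ≤ 1})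

/-- The duality index `R(X) = α̂⁻¹` (conventions `0⁻¹ = ∞`, `∞⁻¹ = 0`). -/
noncomputable def dualityIndex (μ : Measure Ω) (X : Ω → ℝ) : ℝ≥0∞ :=
  (alphaHat μ X)⁻¹

/-- The mean of `X` is well defined: `𝔼[X⁻] < ∞` or `𝔼[X⁺] < ∞`. -/
def HasWellDefinedMean (μ : Measure Ω) (X : Ω → ℝ) : Prop :=
  (∫⁻ ω, ENNReal.ofReal (max (-X ω) 0) ∂μ) < ⊤ ∨
    (∫⁻ ω, ENNReal.ofReal (max (X ω) 0) ∂μ) < ⊤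

noncomputable section Stmt7Aux

def q7 (n : ℕ) : ℝ := ((n:ℝ)+1)^(-2:ℤ) * Real.exp (-3*((n:ℝ)+1) - 3)

lemma q7_nonneg (n : ℕ) : 0 ≤ q7 n := by
  unfold q7; positivity

lemma q7_eq (n : ℕ) : q7 n = (1/((n:ℝ)+1)^2) * Real.exp (-3) ^ (n+2) := by
  unfold q7
  rw [← Real.exp_nat_mul]
  congr 1
  · rw [zpow_neg, zpow_two, sq, one_div]
  · congr 1; push_cast; ring

lemma exp3_ge : (13:ℝ) ≤ Real.exp 3 := by
  have h := Real.exp_one_gt_d9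
  have h2 : (2.7:ℝ) ≤ Real.exp 1 := by linarith
  have h3 : Real.exp 3 = (Real.exp 1)^3 := by
    rw [← Real.exp_nat_mul]; norm_num
  calc (13:ℝ) ≤ 2.7^3 := by norm_num
    _ ≤ (Real.exp 1)^3 := pow_le_pow_left₀ (by norm_num) h2 3
    _ = Real.exp 3 := h3.symm

lemma expm3 : Real.exp (-3) ≤ 1/13 := by
  rw [Real.exp_neg]
  rw [inv_le_comm₀ (Real.exp_pos 3) (by norm_num)]
  simpa using exp3_ge

lemma expm3_pos : 0 < Real.exp (-3) := Real.exp_pos _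

lemma expm3_lt1 : Real.exp (-3) < 1 := by linarith [expm3]

lemma q7_le (n : ℕ) : q7 n ≤ Real.exp (-3) ^ (n+2) := by
  rw [q7_eq]
  have h1 : (1/((n:ℝ)+1)^2) ≤ 1 := by
    rw [div_le_one (by positivity)]
    nlinarith [Nat.cast_nonneg (α := ℝ) n]
  nlinarith [pow_pos expm3_pos (n+2), pow_nonneg expm3_pos.le (n+2)]

lemma q7_mul_le (n : ℕ) : q7 n * ((n:ℝ)+1) ≤ Real.exp (-3) ^ (n+2) := by
  rw [q7_eq]
  have hn : (0:ℝ) < (n:ℝ)+1 := by positivity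
  have h1 : (1/((n:ℝ)+1)^2) * ((n:ℝ)+1) ≤ 1 := by
    rw [div_mul_eq_mul_div, div_le_one (by positivity)]
    nlinarith [Nat.cast_nonneg (α := ℝ) n]
  calc (1/((n:ℝ)+1)^2) * Real.exp (-3) ^ (n+2) * ((n:ℝ)+1)
      = ((1/((n:ℝ)+1)^2) * ((n:ℝ)+1)) * Real.exp (-3) ^ (n+2) := by ring
    _ ≤ 1 * Real.exp (-3) ^ (n+2) :=
        mul_le_mul_of_nonneg_right h1 (pow_nonneg expm3_pos.le _)
    _ = _ := one_mul _

lemma geo_summable : Summable (fun n : ℕ => Real.exp (-3) ^ (n+2)) := by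
  have h := (summable_geometric_of_lt_one expm3_pos.le expm3_lt1).mul_left
    (Real.exp (-3) ^ 2)
  exact h.congr (fun n => by rw [← pow_add]; ring_nf)

lemma geo_tsum_le : ∑' n : ℕ, Real.exp (-3) ^ (n+2) ≤ 1/100 := by
  have h : ∑' n : ℕ, Real.exp (-3) ^ (n+2)
      = Real.exp (-3) ^ 2 * (1 - Real.exp (-3))⁻¹ := by
    rw [← tsum_geometric_of_lt_one expm3_pos.le expm3_lt1, ← tsum_mul_left]
    exact tsum_congr (fun n => by rw [← pow_add]; ring_nf)
  rw [h]
  have h1 : (1 - Real.exp (-3))⁻¹ ≤ (1 - 1/13)⁻¹ := by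
    apply inv_anti₀ (by norm_num)
    linarith [expm3]
  have h2 : Real.exp (-3) ^ 2 ≤ (1/13)^2 := by
    exact pow_le_pow_left₀ expm3_pos.le expm3 2
  calc Real.exp (-3)^2 * (1 - Real.exp (-3))⁻¹ ≤ (1/13)^2 * (1-1/13)⁻¹ := by
        apply mul_le_mul h2 h1 (inv_nonneg.2 (by linarith [expm3])) (by norm_num)
    _ ≤ 1/100 := by norm_num

lemma q7_summable : Summable q7 :=
  Summable.of_nonneg_of_le q7_nonneg q7_le geo_summable

def S7 : ℝ := ∑' n, q7 n

lemma S7_nonneg : 0 ≤ S7 := tsum_nonneg q7_nonneg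

lemma S7_le : S7 ≤ 1/100 :=
  le_trans (Summable.tsum_le_tsum q7_le q7_summable geo_summable) geo_tsum_le

lemma q7_mul_summable : Summable (fun n => q7 n * ((n:ℝ)+1)) :=
  Summable.of_nonneg_of_le (fun n => mul_nonneg (q7_nonneg n) (by positivity)) q7_mul_le geo_summable

def B7 : ℝ := ∑' n, q7 n * ((n:ℝ)+1)

lemma B7_nonneg : 0 ≤ B7 := tsum_nonneg (fun n => mul_nonneg (q7_nonneg n) (by positivity))

lemma B7_le : B7 ≤ 1/100 :=
  le_trans (Summable.tsum_le_tsum q7_mul_le q7_mul_summable geo_summable) geo_tsum_le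


def z7 (n : ℕ) : ℝ := ((n:ℝ)+1)^(-2:ℤ)

lemma z7_eq (n : ℕ) : z7 n = 1/((n:ℝ)+1)^2 := by
  unfold z7; rw [zpow_neg, zpow_two, sq, one_div]

lemma z7_nonneg (n : ℕ) : 0 ≤ z7 n := by rw [z7_eq]; positivity

lemma z7_hasSum : HasSum z7 (π^2/6) := by
  have h := hasSum_zeta_two
  have h2 := (hasSum_nat_add_iff' (f := fun n : ℕ => (1:ℝ)/(n:ℝ)^2) 1).mpr h
  simp only [Finset.range_one, Finset.sum_singleton, Nat.cast_zero] at h2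
  norm_num at h2
  have : z7 = fun n : ℕ => (1:ℝ)/((n:ℝ)+1)^2 := funext (fun n => z7_eq n)
  rw [this]
  simpa only [one_div] using h2

lemma z7_summable : Summable z7 := z7_hasSum.summable

lemma z7_tsum_le : ∑' n, z7 n ≤ 2 := by
  rw [z7_hasSum.tsum_eq]
  nlinarith [Real.pi_lt_d2, Real.pi_pos]

/-- convexity of exp -/
lemma exp_interp {t y : ℝ} (ht0 : 0 ≤ t) (ht1 : t ≤ 1) :
    Real.exp (t*y) ≤ 1 - t + t * Real.exp y := by
  have h := convexOn_exp.2 (Set.mem_univ (0:ℝ)) (Set.mem_univ y)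
    (by linarith : (0:ℝ) ≤ 1 - t) ht0 (by ring)
  simpa using h


def w7 : ℕ → ℝ≥0∞
  | 0 => ENNReal.ofReal (1 - S7)
  | n+1 => ENNReal.ofReal (q7 n)

def mu7 : Measure ℕ := Measure.sum fun n => w7 n • Measure.dirac n

def X7 : ℕ → ℝ
  | 0 => 3
  | n+1 => -((n:ℝ)+1)

lemma X7_measurable : Measurable X7 := measurable_from_top

lemma mu7_singleton (k : ℕ) : mu7 {k} = w7 k := by
  rw [mu7, Measure.sum_apply _ (measurableSet_singleton k)]
  simp only [Measure.smul_apply, Measure.dirac_apply, smul_eq_mul]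
  rw [tsum_eq_single k]
  · simp
  · intro b hb; simp [Set.indicator, hb]

lemma lint7 (f : ℕ → ℝ≥0∞) : ∫⁻ n, f n ∂mu7 = ∑' n, f n * w7 n := by
  rw [lintegral_countable']
  simp only [mu7_singleton]

lemma tsum_ofReal_q7 : ∑' n, ENNReal.ofReal (q7 n) = ENNReal.ofReal S7 :=
  (ENNReal.ofReal_tsum_of_nonneg q7_nonneg q7_summable).symm

lemma mu7_univ : mu7 Set.univ = ∑' n, w7 n := by
  rw [mu7, Measure.sum_apply _ MeasurableSet.univ]
  simp [Measure.dirac_apply]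

lemma tsum_w7 : ∑' n, w7 n = 1 := by
  rw [tsum_eq_zero_add' ENNReal.summable]
  have h0 : w7 0 = ENNReal.ofReal (1 - S7) := rfl
  have hsucc : ∀ n : ℕ, w7 (n+1) = ENNReal.ofReal (q7 n) := fun n => rfl
  simp only [h0, hsucc, tsum_ofReal_q7]
  rw [← ENNReal.ofReal_add (by linarith [S7_le]) S7_nonneg]
  norm_num

instance mu7_prob : IsProbabilityMeasure mu7 :=
  ⟨by rw [mu7_univ, tsum_w7]⟩


lemma emg7 (α : ℝ) :
    emg mu7 X7 α = ENNReal.ofReal ((1 - S7) * Real.exp (-(3*α)))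
      + ∑' n, ENNReal.ofReal (q7 n * Real.exp (α*((n:ℝ)+1))) := by
  rw [emg, lint7, tsum_eq_zero_add' ENNReal.summable]
  congr 1
  · have h : (-α) * X7 0 = -(3*α) := by
      show (-α) * 3 = -(3*α); ring
    rw [h, show w7 0 = ENNReal.ofReal (1 - S7) from rfl,
      ← ENNReal.ofReal_mul (Real.exp_nonneg _)]
    rw [mul_comm]
  · refine tsum_congr fun n => ?_
    have h : (-α) * X7 (n+1) = α*((n:ℝ)+1) := by
      show (-α) * (-((n:ℝ)+1)) = _; ring
    rw [h, show w7 (n+1) = ENNReal.ofReal (q7 n) from rfl,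
      ← ENNReal.ofReal_mul (Real.exp_nonneg _)]
    rw [mul_comm]

lemma tail_big {ε x : ℝ} (hε : 0 < ε) (hx : 27 * Real.exp 3 / ε^3 ≤ x) (hx1 : 1 ≤ x) :
    1 ≤ (1/x^2) * Real.exp (-3) * Real.exp (ε * x) := by
  have hx0 : (0:ℝ) < x := by linarith
  have h1 : (ε*x/3)^3 ≤ Real.exp (ε*x) := by
    have h := Real.add_one_le_exp (ε*x/3)
    calc (ε*x/3)^3 ≤ (ε*x/3+1)^3 := pow_le_pow_left₀ (by positivity) (by linarith) 3
      _ ≤ (Real.exp (ε*x/3))^3 :=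
          pow_le_pow_left₀ (by positivity) (by linarith) 3
      _ = Real.exp (ε*x) := by
          rw [← Real.exp_nat_mul]; congr 1; push_cast; field_simp
  have h2 : Real.exp 3 ≤ ε^3 * x / 27 := by
    rw [div_le_iff₀ (by positivity)] at hx
    nlinarith
  have h3 : Real.exp (-3) * Real.exp 3 = 1 := by
    rw [← Real.exp_add]; norm_num
  calc (1:ℝ) = Real.exp (-3) * Real.exp 3 := h3.symm
    _ ≤ Real.exp (-3) * (ε^3*x/27) :=
        mul_le_mul_of_nonneg_left h2 (Real.exp_pos _).le
    _ = (1/x^2) * Real.exp (-3) * (ε*x/3)^3 := by field_simp; ring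
    _ ≤ (1/x^2) * Real.exp (-3) * Real.exp (ε*x) :=
        mul_le_mul_of_nonneg_left h1 (by positivity)

lemma emg7_top {α : ℝ} (hα : 3 < α) : emg mu7 X7 α = ⊤ := by
  rw [emg7]
  suffices h : ∑' n, ENNReal.ofReal (q7 n * Real.exp (α*((n:ℝ)+1))) = ⊤ by
    rw [h, add_top]
  set ε := α - 3 with hεdef
  have hε0 : 0 < ε := by simp [hεdef]; linarith
  set N := ⌈27 * Real.exp 3 / ε^3⌉₊ with hN
  set a : ℕ → ℝ≥0∞ := fun n => ENNReal.ofReal (q7 n * Real.exp (α*((n:ℝ)+1))) with ha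
  have key : ∀ n : ℕ, N ≤ n → (1:ℝ≥0∞) ≤ a n := by
    intro n hn
    have hx1 : (1:ℝ) ≤ (n:ℝ)+1 := by linarith [Nat.cast_nonneg (α := ℝ) n]
    have hxN : 27 * Real.exp 3 / ε^3 ≤ (n:ℝ)+1 := by
      calc 27 * Real.exp 3 / ε^3 ≤ (N:ℝ) := Nat.le_ceil _
        _ ≤ (n:ℝ) := by exact_mod_cast hn
        _ ≤ (n:ℝ)+1 := by linarith
    have hqx : q7 n * Real.exp (α*((n:ℝ)+1))
        = (1/((n:ℝ)+1)^2) * Real.exp (-3) * Real.exp (ε*((n:ℝ)+1)) := by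
      have hz : ((n:ℝ)+1)^(-2:ℤ) = 1/((n:ℝ)+1)^2 := z7_eq n
      unfold q7
      rw [hz, mul_assoc, mul_assoc, ← Real.exp_add, ← Real.exp_add]
      congr 2
      simp [hεdef]; ring
    rw [ha]
    simp only []
    rw [hqx]
    exact ENNReal.one_le_ofReal.mpr (tail_big hε0 hxN hx1)
  have htop : (⊤:ℝ≥0∞) ≤ ∑' n, a n := by
    calc (⊤:ℝ≥0∞) = ∑' _ : ℕ, (1:ℝ≥0∞) :=
          (ENNReal.tsum_const_eq_top_of_ne_zero one_ne_zero).symm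
      _ ≤ ∑' n, a (n + N) := ENNReal.tsum_le_tsum fun n => key _ (Nat.le_add_left N n)
      _ ≤ ∑' n, a n :=
          Summable.tsum_le_tsum_of_inj (· + N) (add_left_injective N)
            (fun _ _ => zero_le) (fun _ => le_rfl) ENNReal.summable ENNReal.summable
  exact top_le_iff.mp htop


lemma term_le {α : ℝ} (h3 : α ≤ 3) (n : ℕ) :
    q7 n * Real.exp (α*((n:ℝ)+1)) ≤ Real.exp (-3) * z7 n := by
  have hc : (0:ℝ) ≤ (n:ℝ) := Nat.cast_nonneg n
  have h : Real.exp (α*((n:ℝ)+1)) ≤ Real.exp (3*((n:ℝ)+1)) :=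
    Real.exp_le_exp.mpr (by nlinarith)
  have heq : q7 n * Real.exp (3*((n:ℝ)+1)) = Real.exp (-3) * z7 n := by
    unfold q7 z7
    rw [mul_assoc, ← Real.exp_add,
      show -3*((n:ℝ)+1) - 3 + 3*((n:ℝ)+1) = -3 by ring]
    ring
  calc q7 n * Real.exp (α*((n:ℝ)+1)) ≤ q7 n * Real.exp (3*((n:ℝ)+1)) :=
        mul_le_mul_of_nonneg_left h (q7_nonneg n)
    _ = _ := heq

lemma g7_summable {α : ℝ} (h3 : α ≤ 3) :
    Summable (fun n => q7 n * Real.exp (α*((n:ℝ)+1))) :=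
  Summable.of_nonneg_of_le (fun n => mul_nonneg (q7_nonneg n) (Real.exp_nonneg _))
    (term_le h3) (z7_summable.mul_left _)

lemma emg7_lt1 {α : ℝ} (h0 : 0 < α) (h3 : α ≤ 3) : emg mu7 X7 α < 1 := by
  rw [emg7]
  have hsum := g7_summable h3
  rw [← ENNReal.ofReal_tsum_of_nonneg
    (fun n => mul_nonneg (q7_nonneg n) (Real.exp_nonneg _)) hsum]
  set T := ∑' n, q7 n * Real.exp (α*((n:ℝ)+1)) with hT
  have hTnn : 0 ≤ T := tsum_nonneg (fun n => mul_nonneg (q7_nonneg n) (Real.exp_nonneg _))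
  rw [← ENNReal.ofReal_add (mul_nonneg (by linarith [S7_le]) (Real.exp_nonneg _)) hTnn, ← ENNReal.ofReal_one]
  rw [ENNReal.ofReal_lt_ofReal_iff (by norm_num)]
  -- real inequality
  set t := α/3 with ht
  have ht0 : 0 < t := by positivity
  have ht1 : t ≤ 1 := by rw [ht]; linarith
  set Z := ∑' n, z7 n with hZ
  have hZ0 : 0 ≤ Z := tsum_nonneg z7_nonneg
  have hZ2 : Z ≤ 2 := z7_tsum_le
  have he3 : Real.exp (-3) ≤ 1/13 := expm3
  have he9 : Real.exp (-9:ℝ) ≤ 1/13 := by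
    calc Real.exp (-9:ℝ) ≤ Real.exp (-3) := Real.exp_le_exp.mpr (by norm_num)
      _ ≤ 1/13 := expm3
  have hS0 := S7_nonneg
  have hS1 := S7_le
  -- bound T
  have hTle : T ≤ (1-t)*S7 + t*(Real.exp (-3) * Z) := by
    have hrhs : (1-t)*S7 + t*(Real.exp (-3) * Z)
        = ∑' n, ((1-t)*q7 n + t*(Real.exp (-3) * z7 n)) := by
      rw [hZ, show S7 = ∑' n, q7 n from rfl, ← tsum_mul_left, ← tsum_mul_left,
        ← tsum_mul_left,
        ← Summable.tsum_add (q7_summable.mul_left _) ((z7_summable.mul_left _).mul_left _)]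
    rw [hT, hrhs]
    apply Summable.tsum_le_tsum _ hsum
      ((q7_summable.mul_left _).add ((z7_summable.mul_left _).mul_left _))
    intro n
    have hconv := exp_interp ht0.le ht1 (y := 3*((n:ℝ)+1))
    have harg : t * (3*((n:ℝ)+1)) = α*((n:ℝ)+1) := by rw [ht]; ring
    rw [harg] at hconv
    have heq : q7 n * Real.exp (3*((n:ℝ)+1)) = Real.exp (-3) * z7 n := by
      unfold q7 z7
      rw [mul_assoc, ← Real.exp_add,
        show -3*((n:ℝ)+1) - 3 + 3*((n:ℝ)+1) = -3 by ring]
      ring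
    calc q7 n * Real.exp (α*((n:ℝ)+1))
        ≤ q7 n * (1 - t + t * Real.exp (3*((n:ℝ)+1))) :=
          mul_le_mul_of_nonneg_left hconv (q7_nonneg n)
      _ = (1-t) * q7 n + t * (q7 n * Real.exp (3*((n:ℝ)+1))) := by ring
      _ = (1-t) * q7 n + t * (Real.exp (-3) * z7 n) := by rw [heq]
  -- bound head
  have hA : (1-S7) * Real.exp (-(3*α)) ≤ (1-S7) * (1 - t + t * Real.exp (-9:ℝ)) := by
    apply mul_le_mul_of_nonneg_left _ (by linarith)
    have hconv := exp_interp ht0.le ht1 (y := (-9:ℝ))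
    have harg : t * (-9:ℝ) = -(3*α) := by rw [ht]; ring
    rw [harg] at hconv
    exact hconv
  set c : ℝ := (1-S7) * Real.exp (-9:ℝ) + Real.exp (-3) * Z with hc
  have hcle : c ≤ 3/13 := by
    have h1 : (1-S7) * Real.exp (-9:ℝ) ≤ 1/13 := by
      nlinarith [Real.exp_nonneg (-9:ℝ)]
    have h2 : Real.exp (-3) * Z ≤ 2/13 := by
      nlinarith [expm3_pos.le]
    rw [hc]; linarith
  have hkey : (1-S7)*(1 - t + t * Real.exp (-9:ℝ)) + ((1-t)*S7 + t*(Real.exp (-3) * Z))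
      = 1 - t*(1 - c) := by rw [hc]; ring
  have hfin : t*(10/13) ≤ t*(1-c) := mul_le_mul_of_nonneg_left (by linarith) ht0.le
  linarith

lemma alphaHat7 : alphaHat mu7 X7 = 3 := by
  unfold alphaHat
  apply le_antisymm
  · apply sSup_le
    rintro x ⟨α, ⟨hα0, hα1⟩, rfl⟩
    have hα3 : α ≤ 3 := by
      by_contra h
      rw [emg7_top (by linarith)] at hα1
      simp at hα1
    calc ENNReal.ofReal α ≤ ENNReal.ofReal 3 := ENNReal.ofReal_le_ofReal hα3
      _ = 3 := by norm_num
  · have h3 : (3:ℝ≥0∞) = ENNReal.ofReal 3 := by norm_num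
    rw [h3]
    exact le_sSup ⟨3, ⟨by norm_num, (emg7_lt1 (by norm_num) le_rfl).le⟩, rfl⟩


lemma X7_integrable : Integrable X7 mu7 := by
  refine ⟨X7_measurable.aestronglyMeasurable, ?_⟩
  rw [hasFiniteIntegral_iff_norm, lint7]
  rw [tsum_eq_zero_add' ENNReal.summable]
  apply ENNReal.add_lt_top.mpr
  constructor
  · exact ENNReal.mul_lt_top ENNReal.ofReal_lt_top
      (by show ENNReal.ofReal (1-S7) < ⊤; exact ENNReal.ofReal_lt_top)
  · have heq : ∀ n : ℕ, ENNReal.ofReal ‖X7 (n+1)‖ * w7 (n+1)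
        = ENNReal.ofReal (q7 n * ((n:ℝ)+1)) := by
      intro n
      have hnorm : ‖X7 (n+1)‖ = (n:ℝ)+1 := by
        show ‖-((n:ℝ)+1)‖ = (n:ℝ)+1
        rw [norm_neg, Real.norm_of_nonneg (by positivity)]
      rw [hnorm, show w7 (n+1) = ENNReal.ofReal (q7 n) from rfl,
        ← ENNReal.ofReal_mul (by positivity), mul_comm]
    calc ∑' n, ENNReal.ofReal ‖X7 (n+1)‖ * w7 (n+1)
        = ∑' n, ENNReal.ofReal (q7 n * ((n:ℝ)+1)) := tsum_congr heq
      _ = ENNReal.ofReal B7 :=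
          (ENNReal.ofReal_tsum_of_nonneg
            (fun n => mul_nonneg (q7_nonneg n) (by positivity)) q7_mul_summable).symm
      _ < ⊤ := ENNReal.ofReal_lt_top

lemma integral_X7 : ∫ ω, X7 ω ∂mu7 = 3*(1-S7) - B7 := by
  rw [integral_countable' X7_integrable]
  simp only [measureReal_def]
  have hg1 : ∀ n:ℕ, (w7 (n+1)).toReal * X7 (n+1) = -(q7 n * ((n:ℝ)+1)) := by
    intro n
    show (ENNReal.ofReal (q7 n)).toReal * (-((n:ℝ)+1)) = _
    rw [ENNReal.toReal_ofReal (q7_nonneg n)]; ring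
  have h0 : (w7 0).toReal * X7 0 = 3*(1-S7) := by
    show (ENNReal.ofReal (1-S7)).toReal * 3 = _
    rw [ENNReal.toReal_ofReal (by linarith [S7_le])]; ring
  have hsum : Summable (fun n : ℕ => (mu7 {n}).toReal • X7 n) := by
    apply (summable_nat_add_iff 1).mp
    apply (q7_mul_summable.neg).congr
    intro n
    rw [mu7_singleton, smul_eq_mul, hg1 n]
  rw [Summable.tsum_eq_zero_add hsum]
  have htail : ∑' n : ℕ, (mu7 {n+1}).toReal • X7 (n+1) = -B7 := by
    rw [show B7 = ∑' n, q7 n * ((n:ℝ)+1) from rfl, ← tsum_neg]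
    refine tsum_congr fun n => ?_
    rw [mu7_singleton, smul_eq_mul, hg1 n]
  rw [htail, mu7_singleton, smul_eq_mul, h0]
  ring

lemma mean7_pos : 0 < ∫ ω, X7 ω ∂mu7 := by
  rw [integral_X7]
  linarith [S7_le, B7_le, S7_nonneg, B7_nonneg]

lemma X7_preim_neg (n : ℕ) (hn : 1 ≤ n) : {ω : ℕ | X7 ω = -(n:ℝ)} = {n} := by
  ext k
  simp only [Set.mem_setOf_eq, Set.mem_singleton_iff]
  constructor
  · intro h
    cases k with
    | zero =>
      exfalso
      have h3 : (3:ℝ) = -(n:ℝ) := h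
      have h1 : (1:ℝ) ≤ (n:ℝ) := by exact_mod_cast hn
      linarith
    | succ k =>
      have hk : -((k:ℝ)+1) = -(n:ℝ) := h
      have : ((k+1:ℕ):ℝ) = (n:ℝ) := by push_cast; linarith
      exact_mod_cast this
  · rintro rfl
    cases k with
    | zero => omega
    | succ m =>
      show -((m:ℝ)+1) = -(((m+1:ℕ)):ℝ)
      push_cast; ring

lemma X7_preim_3 : {ω : ℕ | X7 ω = 3} = {0} := by
  ext k
  simp only [Set.mem_setOf_eq, Set.mem_singleton_iff]
  constructor
  · intro h
    cases k with
    | zero => rfl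
    | succ k =>
      exfalso
      have hk : -((k:ℝ)+1) = 3 := h
      have h1 : (0:ℝ) ≤ (k:ℝ) := Nat.cast_nonneg k
      linarith
  · rintro rfl; rfl

end Stmt7Aux

theorem stmt_7 :
    ∃ (Ω' : Type) (_ : MeasurableSpace Ω') (μ : Measure Ω') (_ : IsProbabilityMeasure μ)
      (X : Ω' → ℝ), Measurable X ∧
      (∀ n : ℕ, 1 ≤ n →
        μ {ω | X ω = -(n : ℝ)} = ENNReal.ofReal ((n : ℝ) ^ (-2 : ℤ) * Real.exp (-3 * n - 3))) ∧
      μ {ω | X ω = 3} =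
        1 - ∑' n : ℕ, ENNReal.ofReal (((n : ℝ) + 1) ^ (-2 : ℤ) * Real.exp (-3 * ((n : ℝ) + 1) - 3)) ∧
      0 < ∫ ω, X ω ∂μ ∧
      alphaHat μ X = 3 ∧
      (∀ α : ℝ, 0 < α → α ≤ 3 → emg μ X α < 1) ∧
      (∀ α : ℝ, 3 < α → emg μ X α = ⊤) := by
  refine ⟨ℕ, inferInstance, mu7, mu7_prob, X7, X7_measurable, ?_, ?_, mean7_pos,
    alphaHat7, fun α h1 h2 => emg7_lt1 h1 h2, fun α h => emg7_top h⟩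
  · intro n hn
    rw [X7_preim_neg n hn, mu7_singleton]
    obtain ⟨m, rfl⟩ : ∃ m, n = m+1 := ⟨n-1, by omega⟩
    show ENNReal.ofReal (q7 m) = _
    unfold q7
    congr 1
    push_cast
    ring
  · rw [X7_preim_3, mu7_singleton]
    show ENNReal.ofReal (1 - S7) = _
    have hts : (∑' n:ℕ, ENNReal.ofReal (((n:ℝ)+1)^(-2:ℤ) * Real.exp (-3*((n:ℝ)+1)-3)))
        = ENNReal.ofReal S7 := tsum_ofReal_q7
    rw [hts, ENNReal.ofReal_sub 1 S7_nonneg, ENNReal.ofReal_one]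
end

section
/- The duality index is subadditive: for any random variables $X, Y$ (with means well-defined), $\mathcal{R}(X+Y) \leq \mathcal{R}(X) + \mathcal{R}(Y)$, where the index of a sum not having a well-defined mean is taken to be $+\infty$. -/
open MeasureTheory ENNReal Real Filter

variable {Ω : Type*} [MeasurableSpace Ω]

/-- Hölder step: exponential moments combine at the harmonic-type exponent. -/
lemma emg_holder (μ : Measure Ω) {X Y : Ω → ℝ}
    (hX : Measurable X) (hY : Measurable Y) {a b : ℝ} (ha : 0 < a) (hb : 0 < b)
    (hA : emg μ X a ≤ 1) (hB : emg μ Y b ≤ 1) :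
    emg μ (fun ω => X ω + Y ω) (a * b / (a + b)) ≤ 1 := by
  set β := a * b / (a + b) with hβdef
  have hab : 0 < a + b := by linarith
  set p := (a + b) / b with hpdef
  set q := (a + b) / a with hqdef
  have hpq : p.HolderConjugate q := Real.holderConjugate_iff.mpr <| by
    constructor
    · rw [hpdef, lt_div_iff₀ hb]; linarith
    · rw [hpdef, hqdef]
      field_simp
      ring
  set f : Ω → ℝ≥0∞ := fun ω => ENNReal.ofReal (Real.exp (-β * X ω)) with hfdef
  set g : Ω → ℝ≥0∞ := fun ω => ENNReal.ofReal (Real.exp (-β * Y ω)) with hgdef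
  have hfm : AEMeasurable f μ :=
    (ENNReal.measurable_ofReal.comp (Real.measurable_exp.comp
      (hX.const_mul (-β)))).aemeasurable
  have hgm : AEMeasurable g μ :=
    (ENNReal.measurable_ofReal.comp (Real.measurable_exp.comp
      (hY.const_mul (-β)))).aemeasurable
  have hβp : β * p = a := by
    rw [hβdef, hpdef]; field_simp
  have hβq : β * q = b := by
    rw [hβdef, hqdef]; field_simp
  have hfp : ∀ ω, f ω ^ p = ENNReal.ofReal (Real.exp (-a * X ω)) := by
    intro ω
    rw [hfdef, ENNReal.ofReal_rpow_of_pos (Real.exp_pos _), ← Real.exp_mul]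
    congr 1
    rw [← hβp]; ring
  have hgq : ∀ ω, g ω ^ q = ENNReal.ofReal (Real.exp (-b * Y ω)) := by
    intro ω
    rw [hgdef, ENNReal.ofReal_rpow_of_pos (Real.exp_pos _), ← Real.exp_mul]
    congr 1
    rw [← hβq]; ring
  have hHolder := ENNReal.lintegral_mul_le_Lp_mul_Lq μ hpq hfm hgm
  have hmain : emg μ (fun ω => X ω + Y ω) β = ∫⁻ ω, (f * g) ω ∂μ := by
    unfold emg
    congr 1
    funext ω
    show ENNReal.ofReal (Real.exp (-β * (X ω + Y ω))) = f ω * g ω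
    rw [hfdef, hgdef]
    simp only
    rw [← ENNReal.ofReal_mul (Real.exp_nonneg _), ← Real.exp_add]
    congr 1
    ring
  rw [hmain]
  refine hHolder.trans ?_
  have h1 : (∫⁻ ω, f ω ^ p ∂μ) ^ (1 / p) ≤ 1 := by
    apply ENNReal.rpow_le_one _ (by positivity : (0:ℝ) ≤ 1 / p)
    calc (∫⁻ ω, f ω ^ p ∂μ) = emg μ X a := by
          unfold emg; congr 1; funext ω; exact hfp ω
      _ ≤ 1 := hA
  have h2 : (∫⁻ ω, g ω ^ q ∂μ) ^ (1 / q) ≤ 1 := by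
    apply ENNReal.rpow_le_one _ (by positivity : (0:ℝ) ≤ 1 / q)
    calc (∫⁻ ω, g ω ^ q ∂μ) = emg μ Y b := by
          unfold emg; congr 1; funext ω; exact hgq ω
      _ ≤ 1 := hB
  calc (∫⁻ ω, f ω ^ p ∂μ) ^ (1 / p) * (∫⁻ ω, g ω ^ q ∂μ) ^ (1 / q)
      ≤ 1 * 1 := mul_le_mul' h1 h2
    _ = 1 := by norm_num

theorem stmt_9 (μ : Measure Ω) [IsProbabilityMeasure μ] (X Y : Ω → ℝ)
    (hX : Measurable X) (hY : Measurable Y) :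
    dualityIndex μ (fun ω => X ω + Y ω) ≤ dualityIndex μ X + dualityIndex μ Y := by
  by_cases hA0 : alphaHat μ X = 0
  · unfold dualityIndex
    rw [hA0, ENNReal.inv_zero, top_add]
    exact le_top
  by_cases hB0 : alphaHat μ Y = 0
  · unfold dualityIndex
    rw [hB0, ENNReal.inv_zero, add_top]
    exact le_top
  unfold dualityIndex
  rw [← inv_inv ((alphaHat μ X)⁻¹ + (alphaHat μ Y)⁻¹)]
  apply ENNReal.inv_le_inv'
  set s := (alphaHat μ X)⁻¹ + (alphaHat μ Y)⁻¹ with hs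
  apply le_of_forall_lt_imp_le_of_dense
  intro β hβ
  have h1 : s < β⁻¹ := ENNReal.lt_inv_iff_lt_inv.mp hβ
  set ε := (β⁻¹ - s) / 2 with hε
  have hε0 : ε ≠ 0 := by
    apply (ENNReal.half_pos ?_).ne'
    intro h
    rw [tsub_eq_zero_iff_le] at h
    exact absurd h (not_le.mpr h1)
  have hsum : s + (ε + ε) ≤ β⁻¹ := by
    rw [hε, ENNReal.add_halves, add_tsub_cancel_of_le h1.le]
  -- pick a good α for X
  have hxlt : ((alphaHat μ X)⁻¹ + ε)⁻¹ < alphaHat μ X := by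
    exact ENNReal.inv_lt_iff_inv_lt.mpr
      (ENNReal.lt_add_right (ENNReal.inv_ne_top.mpr hA0) hε0)
  obtain ⟨x, hxS, hxgt⟩ := lt_sSup_iff.mp hxlt
  obtain ⟨a, ⟨ha0, haemg⟩, rfl⟩ := hxS
  have ha_pos : 0 < a :=
    ENNReal.ofReal_pos.mp (lt_of_le_of_lt zero_le hxgt)
  have hainv : (ENNReal.ofReal a)⁻¹ ≤ (alphaHat μ X)⁻¹ + ε := by
    rw [← inv_inv ((alphaHat μ X)⁻¹ + ε)]
    exact ENNReal.inv_le_inv' hxgt.le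
  -- pick a good α for Y
  have hylt : ((alphaHat μ Y)⁻¹ + ε)⁻¹ < alphaHat μ Y := by
    exact ENNReal.inv_lt_iff_inv_lt.mpr
      (ENNReal.lt_add_right (ENNReal.inv_ne_top.mpr hB0) hε0)
  obtain ⟨y, hyS, hygt⟩ := lt_sSup_iff.mp hylt
  obtain ⟨b, ⟨hb0, hbemg⟩, rfl⟩ := hyS
  have hb_pos : 0 < b :=
    ENNReal.ofReal_pos.mp (lt_of_le_of_lt zero_le hygt)
  have hbinv : (ENNReal.ofReal b)⁻¹ ≤ (alphaHat μ Y)⁻¹ + ε := by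
    rw [← inv_inv ((alphaHat μ Y)⁻¹ + ε)]
    exact ENNReal.inv_le_inv' hygt.le
  -- combine
  have hu : (ENNReal.ofReal a)⁻¹ + (ENNReal.ofReal b)⁻¹ ≤ β⁻¹ := by
    calc (ENNReal.ofReal a)⁻¹ + (ENNReal.ofReal b)⁻¹
        ≤ ((alphaHat μ X)⁻¹ + ε) + ((alphaHat μ Y)⁻¹ + ε) := add_le_add hainv hbinv
      _ = s + (ε + ε) := by rw [hs]; ring
      _ ≤ β⁻¹ := hsum
  have hkey : emg μ (fun ω => X ω + Y ω) (a * b / (a + b)) ≤ 1 :=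
    emg_holder μ hX hY ha_pos hb_pos haemg hbemg
  have hC : ENNReal.ofReal (a * b / (a + b)) ≤ alphaHat μ (fun ω => X ω + Y ω) :=
    le_sSup ⟨a * b / (a + b), ⟨by positivity, hkey⟩, rfl⟩
  have harith : ((ENNReal.ofReal a)⁻¹ + (ENNReal.ofReal b)⁻¹)⁻¹
      = ENNReal.ofReal (a * b / (a + b)) := by
    rw [← ENNReal.ofReal_inv_of_pos ha_pos, ← ENNReal.ofReal_inv_of_pos hb_pos,
      ← ENNReal.ofReal_add (by positivity) (by positivity),
      ← ENNReal.ofReal_inv_of_pos (by positivity)]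
    congr 1
    field_simp
    ring
  have hβle : β ≤ ((ENNReal.ofReal a)⁻¹ + (ENNReal.ofReal b)⁻¹)⁻¹ := by
    rw [← inv_inv β]
    exact ENNReal.inv_le_inv' hu
  exact hβle.trans (harith ▸ hC)
end

section
/- Fix $y > 0$, a concave strictly increasing utility $u$ with $u(0)=0$, and pricing kernel $\rho > 0$ with $\mathbb{E}[\rho]=1$. Define $\varphi(\alpha) = \inf\{\mathbb{E}[e^{-\alpha u(Y)}] : Y \in L^1, \mathbb{E}[\rho Y] = -y\}$ for $\alpha > 0$ and $\varphi(0) = 1$. Then $\varphi$ is convex on $[0, \infty)$. -/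
open MeasureTheory ENNReal Real Filter

variable {Ω : Type*} [MeasurableSpace Ω]

set_option maxHeartbeats 1000000 in
theorem stmt_16 (μ : Measure Ω) [IsProbabilityMeasure μ]
    (u : ℝ → ℝ) (hu : ConcaveOn ℝ Set.univ u) (humono : StrictMono u) (hu0 : u 0 = 0)
    (ρ : Ω → ℝ) (hρm : Measurable ρ) (hρpos : ∀ᵐ ω ∂μ, 0 < ρ ω)
    (hρint : Integrable ρ μ) (hρ1 : ∫ ω, ρ ω ∂μ = 1)
    (y : ℝ) (hy : 0 < y)
    (φ : ℝ → ℝ≥0∞)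
    (hφ : ∀ α : ℝ, φ α =
      ⨅ (Y : {Y : Ω → ℝ // Integrable Y μ ∧ Integrable (fun ω => ρ ω * Y ω) μ ∧
          (∫ ω, ρ ω * Y ω ∂μ) = -y}),
        ∫⁻ ω, ENNReal.ofReal (Real.exp (-α * u (Y.1 ω))) ∂μ) :
    ∀ a b k : ℝ, 0 ≤ a → 0 ≤ b → 0 ≤ k → k ≤ 1 →
      φ (k * a + (1 - k) * b) ≤ ENNReal.ofReal k * φ a + ENNReal.ofReal (1 - k) * φ b := by
  intro a b k ha hb hk hk1
  have hum : Measurable u := humono.monotone.measurable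
  have hNe : Nonempty {Y : Ω → ℝ // Integrable Y μ ∧ Integrable (fun ω => ρ ω * Y ω) μ ∧
      (∫ ω, ρ ω * Y ω ∂μ) = -y} := by
    refine ⟨⟨fun _ => -y, integrable_const _, hρint.mul_const _, ?_⟩⟩
    rw [MeasureTheory.integral_mul_const, hρ1, one_mul]
  rcases eq_or_lt_of_le hk with rfl | hk0
  · simp
  rcases eq_or_lt_of_le hk1 with rfl | hk1'
  · simp
  by_cases hc : k * a + (1 - k) * b = 0
  · have ha0 : a = 0 := by nlinarith
    have hb0 : b = 0 := by nlinarith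
    subst ha0; subst hb0
    have h1 : ENNReal.ofReal k * φ 0 + ENNReal.ofReal (1 - k) * φ 0 = φ 0 := by
      rw [← add_mul, ← ENNReal.ofReal_add hk (by linarith)]
      norm_num
    simp only [mul_zero, zero_add, h1, le_refl]
  · set c : ℝ := k * a + (1 - k) * b with hcdef
    have hcnn : 0 ≤ c := add_nonneg (mul_nonneg hk ha) (mul_nonneg (by linarith) hb)
    have hcpos : 0 < c := lt_of_le_of_ne hcnn (Ne.symm hc)
    set β : ℝ := k * a / c with hβdef
    have hβ0 : 0 ≤ β := div_nonneg (mul_nonneg hk ha) hcnn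
    have hβ1 : β ≤ 1 := by
      rw [div_le_one hcpos]
      nlinarith
    have hcβ : c * β = k * a := by
      rw [hβdef]
      field_simp
    have hcβ' : c * (1 - β) = (1 - k) * b := by
      have : c * (1 - β) = c - c * β := by ring
      rw [this, hcβ, hcdef]
      ring
    have key : ∀ Y Y' : {Y : Ω → ℝ // Integrable Y μ ∧ Integrable (fun ω => ρ ω * Y ω) μ ∧
        (∫ ω, ρ ω * Y ω ∂μ) = -y},
        φ c ≤ ENNReal.ofReal k * (∫⁻ ω, ENNReal.ofReal (Real.exp (-a * u (Y.1 ω))) ∂μ)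
            + ENNReal.ofReal (1 - k) * (∫⁻ ω, ENNReal.ofReal (Real.exp (-b * u (Y'.1 ω))) ∂μ) := by
      rintro ⟨Y, hYint, hρY, hYy⟩ ⟨Y', hY'int, hρY', hY'y⟩
      set Z : Ω → ℝ := fun ω => β * Y ω + (1 - β) * Y' ω with hZ
      have hfun : (fun ω => ρ ω * Z ω)
          = fun ω => β * (ρ ω * Y ω) + (1 - β) * (ρ ω * Y' ω) := by
        funext ω; simp only [hZ]; ring
      have hZmem : Integrable Z μ ∧ Integrable (fun ω => ρ ω * Z ω) μ ∧
          (∫ ω, ρ ω * Z ω ∂μ) = -y := by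
        refine ⟨(hYint.const_mul β).add (hY'int.const_mul (1 - β)), ?_, ?_⟩
        · rw [hfun]; exact (hρY.const_mul β).add (hρY'.const_mul (1 - β))
        · rw [hfun, integral_add (hρY.const_mul β) (hρY'.const_mul (1 - β)),
            integral_const_mul, integral_const_mul, hYy, hY'y]
          ring
      have pw : ∀ ω, Real.exp (-c * u (Z ω)) ≤
          k * Real.exp (-a * u (Y ω)) + (1 - k) * Real.exp (-b * u (Y' ω)) := by
        intro ω
        have hZω : Z ω = β * Y ω + (1 - β) * Y' ω := by rw [hZ]
        rw [hZω]
        have hcon := hu.2 (Set.mem_univ (Y ω)) (Set.mem_univ (Y' ω)) hβ0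
          (by linarith : (0:ℝ) ≤ 1 - β) (by ring)
        simp only [smul_eq_mul] at hcon
        have e1 : c * (β * u (Y ω) + (1 - β) * u (Y' ω))
            = k * a * u (Y ω) + (1 - k) * b * u (Y' ω) := by
          rw [mul_add, ← mul_assoc, ← mul_assoc, hcβ, hcβ']
        have h1 : Real.exp (-c * u (β * Y ω + (1 - β) * Y' ω))
            ≤ Real.exp (k * (-a * u (Y ω)) + (1 - k) * (-b * u (Y' ω))) := by
          apply Real.exp_le_exp.2
          have h2 := mul_le_mul_of_nonneg_left hcon hcnn
          rw [e1] at h2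
          nlinarith [h2]
        have h3 := convexOn_exp.2 (Set.mem_univ (-a * u (Y ω))) (Set.mem_univ (-b * u (Y' ω)))
          hk0.le (by linarith : (0:ℝ) ≤ 1 - k) (by ring)
        simp only [smul_eq_mul] at h3
        exact h1.trans h3
      have m1 : AEMeasurable (fun ω => ENNReal.ofReal k
          * ENNReal.ofReal (Real.exp (-a * u (Y ω)))) μ := by
        exact ((ENNReal.measurable_ofReal.comp
          (Real.measurable_exp.comp (hum.const_mul (-a)))).comp_aemeasurable
          hYint.aemeasurable).const_mul _
      clear_value Z β c
      calc φ c ≤ ∫⁻ ω, ENNReal.ofReal (Real.exp (-c * u (Z ω))) ∂μ := by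
            rw [hφ c]
            have := iInf_le (fun (Y : {Y : Ω → ℝ // Integrable Y μ ∧
                Integrable (fun ω => ρ ω * Y ω) μ ∧ (∫ ω, ρ ω * Y ω ∂μ) = -y}) =>
                ∫⁻ ω, ENNReal.ofReal (Real.exp (-c * u (Y.1 ω))) ∂μ) ⟨Z, hZmem⟩
            simpa using this
        _ ≤ ∫⁻ ω, (ENNReal.ofReal k * ENNReal.ofReal (Real.exp (-a * u (Y ω)))
              + ENNReal.ofReal (1 - k) * ENNReal.ofReal (Real.exp (-b * u (Y' ω)))) ∂μ := by
            refine lintegral_mono fun ω => ?_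
            rw [← ENNReal.ofReal_mul hk, ← ENNReal.ofReal_mul (by linarith : (0:ℝ) ≤ 1 - k),
              ← ENNReal.ofReal_add (mul_nonneg hk (Real.exp_nonneg _)) (mul_nonneg (by linarith) (Real.exp_nonneg _))]
            exact ENNReal.ofReal_le_ofReal (pw ω)
        _ = ENNReal.ofReal k * (∫⁻ ω, ENNReal.ofReal (Real.exp (-a * u (Y ω))) ∂μ)
              + ENNReal.ofReal (1 - k) * (∫⁻ ω, ENNReal.ofReal (Real.exp (-b * u (Y' ω))) ∂μ) := by
            rw [lintegral_add_left' m1, lintegral_const_mul' _ _ ENNReal.ofReal_ne_top,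
              lintegral_const_mul' _ _ ENNReal.ofReal_ne_top]
    rw [hφ a, hφ b, ENNReal.mul_iInf (fun h => (ENNReal.ofReal_ne_top h).elim),
      ENNReal.mul_iInf (fun h => (ENNReal.ofReal_ne_top h).elim), ENNReal.iInf_add]
    refine le_iInf fun Y => ?_
    rw [ENNReal.add_iInf]
    exact le_iInf fun Y' => key Y Y'
end

section
/- Let $u: \mathbb{R}\to\mathbb{R}$ be concave, differentiable, with $u(0)=0$, and let $\rho > 0$ satisfy $\mathbb{E}[\rho]=1$ and $\mathbb{E}[\rho\ln\rho]<\infty$. Fix $y > 0$ and $\alpha > 0$. Then for every integrable $Y$ with $\mathbb{E}[\rho Y] = -y$, $\mathbb{E}[e^{-\alpha u(Y)}] \geq e^{\alpha u'(0) y - \mathbb{E}[\rho\ln\rho]}$. -/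
open MeasureTheory ENNReal Real Filter

variable {Ω : Type*} [MeasurableSpace Ω]

lemma ofReal_max_zero (a : ℝ) : ENNReal.ofReal (max a 0) = ENNReal.ofReal a := by
  rcases le_total a 0 with h | h
  · rw [max_eq_right h, ENNReal.ofReal_eq_zero.2 h, ENNReal.ofReal_zero]
  · rw [max_eq_left h]

lemma ofReal_integral_le_lintegral_ofReal' {μ : Measure Ω} {f : Ω → ℝ}
    (hf : Integrable f μ) :
    ENNReal.ofReal (∫ x, f x ∂μ) ≤ ∫⁻ x, ENNReal.ofReal (f x) ∂μ := by
  calc ENNReal.ofReal (∫ x, f x ∂μ) ≤ ENNReal.ofReal (∫ x, max (f x) 0 ∂μ) :=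
        ENNReal.ofReal_le_ofReal (integral_mono hf hf.pos_part fun x => le_max_left _ _)
    _ = ∫⁻ x, ENNReal.ofReal (max (f x) 0) ∂μ :=
        ofReal_integral_eq_lintegral_ofReal hf.pos_part
          (Filter.Eventually.of_forall fun x => le_max_right _ _)
    _ = ∫⁻ x, ENNReal.ofReal (f x) ∂μ := by
        simp only [ofReal_max_zero]

lemma concave_le_tangent (u : ℝ → ℝ) (hu : ConcaveOn ℝ Set.univ u)
    (hdiff : Differentiable ℝ u) (hu0 : u 0 = 0) (x : ℝ) :
    u x ≤ deriv u 0 * x := by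
  rcases lt_trichotomy x 0 with hx | rfl | hx
  · have h := hu.deriv_le_slope (Set.mem_univ x) (Set.mem_univ 0) hx (hdiff 0)
    rw [slope_def_field, hu0] at h
    have he : (0 - u x) / (0 - x) * x = u x := by
      field_simp
      ring
    have h2 := mul_le_mul_of_nonpos_right h hx.le
    rw [he] at h2
    linarith
  · simp [hu0]
  · have h := hu.slope_le_deriv (Set.mem_univ 0) (Set.mem_univ x) hx (hdiff 0)
    rw [slope_def_field, hu0, sub_zero, sub_zero] at h
    have h2 := mul_le_mul_of_nonneg_right h hx.le
    rw [div_mul_cancel₀ _ hx.ne'] at h2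
    exact h2

theorem stmt_18 (μ : Measure Ω) [IsProbabilityMeasure μ]
    (u : ℝ → ℝ) (hu : ConcaveOn ℝ Set.univ u) (humono : StrictMono u)
    (hdiff : Differentiable ℝ u) (hu0 : u 0 = 0)
    (ρ : Ω → ℝ) (hρm : Measurable ρ) (hρpos : ∀ᵐ ω ∂μ, 0 < ρ ω)
    (hρint : Integrable ρ μ) (hρ1 : ∫ ω, ρ ω ∂μ = 1)
    (hent : Integrable (fun ω => ρ ω * Real.log (ρ ω)) μ)
    (y : ℝ) (hy : 0 < y) (α : ℝ) (hα : 0 < α)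
    (Y : Ω → ℝ) (hYint : Integrable Y μ) (hρY : Integrable (fun ω => ρ ω * Y ω) μ)
    (hbudget : (∫ ω, ρ ω * Y ω ∂μ) = -y) :
    ENNReal.ofReal (Real.exp (α * deriv u 0 * y - ∫ ω, ρ ω * Real.log (ρ ω) ∂μ)) ≤
      ∫⁻ ω, ENNReal.ofReal (Real.exp (-α * u (Y ω))) ∂μ := by
  set β := α * deriv u 0 with hβ
  set E := ∫ ω, ρ ω * Real.log (ρ ω) ∂μ with hE
  set c := Real.exp (β * y - E) with hc
  have hcpos : 0 < c := Real.exp_pos _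
  -- the lower bounding integrable function
  set h : Ω → ℝ := fun ω =>
    c * (1 - Real.log c) * ρ ω - c * β * (ρ ω * Y ω) - c * (ρ ω * Real.log (ρ ω)) with hh
  have hhint : Integrable h μ :=
    ((hρint.const_mul _).sub (hρY.const_mul _)).sub (hent.const_mul _)
  have hhint_val : ∫ ω, h ω ∂μ = c := by
    have i1 : Integrable (fun ω => c * (1 - Real.log c) * ρ ω) μ := hρint.const_mul _
    have i2 : Integrable (fun ω => c * β * (ρ ω * Y ω)) μ := hρY.const_mul _
    have i3 : Integrable (fun ω => c * (ρ ω * Real.log (ρ ω))) μ := hent.const_mul _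
    have i12 : Integrable (fun ω => c * (1 - Real.log c) * ρ ω - c * β * (ρ ω * Y ω)) μ :=
      i1.sub i2
    rw [hh]
    simp only
    rw [integral_sub i12 i3, integral_sub i1 i2,
      integral_const_mul, integral_const_mul, integral_const_mul, hρ1, hbudget, ← hE]
    rw [hc, Real.log_exp]
    ring
  -- pointwise a.e. bound
  have hptwise : ∀ᵐ ω ∂μ, ENNReal.ofReal (h ω) ≤ ENNReal.ofReal (Real.exp (-α * u (Y ω))) := by
    filter_upwards [hρpos] with ω hρω
    apply ENNReal.ofReal_le_ofReal
    have h1 : Real.exp (-β * Y ω) ≤ Real.exp (-α * u (Y ω)) := by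
      apply Real.exp_le_exp.2
      have h0 := concave_le_tangent u hu hdiff hu0 (Y ω)
      have h1 := mul_le_mul_of_nonneg_left h0 hα.le
      rw [hβ]
      linarith
    refine le_trans ?_ h1
    have hpc : 0 < ρ ω * c := mul_pos hρω hcpos
    have key : (-β * Y ω - Real.log (ρ ω * c)) + 1 ≤
        Real.exp (-β * Y ω - Real.log (ρ ω * c)) := Real.add_one_le_exp _
    have hexp : Real.exp (-β * Y ω - Real.log (ρ ω * c)) =
        Real.exp (-β * Y ω) / (ρ ω * c) := by
      rw [Real.exp_sub, Real.exp_log hpc]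
    rw [hexp] at key
    have key2 : (ρ ω * c) * ((-β * Y ω - Real.log (ρ ω * c)) + 1) ≤ Real.exp (-β * Y ω) := by
      have := mul_le_mul_of_nonneg_left key hpc.le
      rwa [mul_div_cancel₀ _ hpc.ne'] at this
    refine le_trans ?_ key2
    rw [Real.log_mul hρω.ne' hcpos.ne']
    rw [hh]
    simp only
    ring_nf
    nlinarith [Real.log_mul hρω.ne' hcpos.ne']
  calc ENNReal.ofReal (Real.exp (α * deriv u 0 * y - E)) = ENNReal.ofReal (∫ ω, h ω ∂μ) := by
        rw [hhint_val, hc, hβ]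
    _ ≤ ∫⁻ ω, ENNReal.ofReal (h ω) ∂μ := ofReal_integral_le_lintegral_ofReal' hhint
    _ ≤ ∫⁻ ω, ENNReal.ofReal (Real.exp (-α * u (Y ω))) ∂μ := lintegral_mono_ae hptwise
end

section
/- Linear utility case: let $u(x) = x$, $\rho > 0$ with $\mathbb{E}[\rho]=1$, $\mathbb{E}[\rho\ln\rho] \in (0,\infty)$, and $y > 0$. Then $Y^* = \frac{-y \ln\rho}{\mathbb{E}[\rho\ln\rho]}$ satisfies $\mathbb{E}[\rho Y^*] = -y$ and $\mathbb{E}[e^{-\alpha^* Y^*}] = 1$ where $\alpha^* = \mathbb{E}[\rho\ln\rho]/y$; moreover for every integrable $Y$ with $\mathbb{E}[\rho Y]=-y$ and every $\alpha > \alpha^*$, $\mathbb{E}[e^{-\alpha Y}] > 1$. Hence the minimal duality index over the budget set equals $y/\mathbb{E}[\rho\ln\rho]$, attained at $Y^*$. -/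
open MeasureTheory ENNReal Real Filter

variable {Ω : Type*} [MeasurableSpace Ω]

lemma emg_key (μ : Measure Ω) [IsProbabilityMeasure μ]
    (ρ : Ω → ℝ) (hρpos : ∀ᵐ ω ∂μ, 0 < ρ ω)
    (hρint : Integrable ρ μ) (hρ1 : ∫ ω, ρ ω ∂μ = 1)
    (hent : Integrable (fun ω => ρ ω * Real.log (ρ ω)) μ)
    (y : ℝ) (hy : 0 < y)
    (Y : Ω → ℝ) (hρY : Integrable (fun ω => ρ ω * Y ω) μ)
    (hbudget : (∫ ω, ρ ω * Y ω ∂μ) = -y)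
    (α : ℝ) (hα : (∫ ω, ρ ω * Real.log (ρ ω) ∂μ) / y < α) :
    1 < emg μ Y α := by
  set H := ∫ ω, ρ ω * Real.log (ρ ω) ∂μ with hHdef
  set g : Ω → ℝ := fun ω => ρ ω + (-α) * (ρ ω * Y ω) - ρ ω * Real.log (ρ ω) with hg
  have hgint : Integrable g μ := (hρint.add (hρY.const_mul (-α))).sub hent
  have hgi : ∫ ω, g ω ∂μ = 1 + α * y - H := by
    have hconst : Integrable (fun ω => -α * (ρ ω * Y ω)) μ := hρY.const_mul (-α)
    have h1 : Integrable (fun ω => ρ ω + -α * (ρ ω * Y ω)) μ := hρint.add hconst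
    simp only [hg]
    rw [integral_sub h1 hent, integral_add hρint hconst, integral_const_mul, hbudget, hρ1,
      ← hHdef]
    ring
  have hpt : ∀ᵐ ω ∂μ, ENNReal.ofReal (g ω) ≤ ENNReal.ofReal (Real.exp (-α * Y ω)) := by
    filter_upwards [hρpos] with ω hω
    apply ENNReal.ofReal_le_ofReal
    have h1 : (-α * Y ω - Real.log (ρ ω)) + 1 ≤ Real.exp (-α * Y ω - Real.log (ρ ω)) :=
      Real.add_one_le_exp _
    have h2 := mul_le_mul_of_nonneg_left h1 hω.le
    have h3 : ρ ω * Real.exp (-α * Y ω - Real.log (ρ ω)) = Real.exp (-α * Y ω) := by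
      rw [Real.exp_sub, Real.exp_log hω]
      field_simp
    calc g ω = ρ ω * ((-α * Y ω - Real.log (ρ ω)) + 1) := by simp only [hg]; ring
      _ ≤ ρ ω * Real.exp (-α * Y ω - Real.log (ρ ω)) := h2
      _ = Real.exp (-α * Y ω) := h3
  have hmax : Integrable (fun ω => max (g ω) 0) μ := hgint.pos_part
  have hle1 : ENNReal.ofReal (∫ ω, g ω ∂μ) ≤ emg μ Y α := by
    calc ENNReal.ofReal (∫ ω, g ω ∂μ)
        ≤ ENNReal.ofReal (∫ ω, max (g ω) 0 ∂μ) :=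
          ENNReal.ofReal_le_ofReal (integral_mono hgint hmax fun ω => le_max_left _ _)
      _ = ∫⁻ ω, ENNReal.ofReal (max (g ω) 0) ∂μ :=
          ofReal_integral_eq_lintegral_ofReal hmax
            (Filter.Eventually.of_forall fun ω => le_max_right _ _)
      _ = ∫⁻ ω, ENNReal.ofReal (g ω) ∂μ := by
          refine lintegral_congr fun ω => ?_
          rcases le_total (g ω) 0 with h | h
          · simp [max_eq_right h, ENNReal.ofReal_eq_zero.mpr h]
          · simp [max_eq_left h]
      _ ≤ emg μ Y α := lintegral_mono_ae hpt
  have hHlt : H < α * y := (div_lt_iff₀ hy).mp hα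
  calc (1:ℝ≥0∞) = ENNReal.ofReal 1 := ENNReal.ofReal_one.symm
    _ < ENNReal.ofReal (1 + α * y - H) :=
        (ENNReal.ofReal_lt_ofReal_iff (by linarith)).mpr (by linarith)
    _ = ENNReal.ofReal (∫ ω, g ω ∂μ) := by rw [hgi]
    _ ≤ emg μ Y α := hle1

theorem stmt_19 (μ : Measure Ω) [IsProbabilityMeasure μ]
    (ρ : Ω → ℝ) (hρm : Measurable ρ) (hρpos : ∀ᵐ ω ∂μ, 0 < ρ ω)
    (hnc : ¬ ∃ c : ℝ, ∀ᵐ ω ∂μ, ρ ω = c)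
    (hρint : Integrable ρ μ) (hρ1 : ∫ ω, ρ ω ∂μ = 1)
    (hent : Integrable (fun ω => ρ ω * Real.log (ρ ω)) μ)
    (hlog : Integrable (fun ω => Real.log (ρ ω)) μ)
    (hentpos : 0 < ∫ ω, ρ ω * Real.log (ρ ω) ∂μ)
    (y : ℝ) (hy : 0 < y) :
    let H := ∫ ω, ρ ω * Real.log (ρ ω) ∂μ
    let Ystar : Ω → ℝ := fun ω => -y * Real.log (ρ ω) / H
    let αstar := H / y
    Integrable (fun ω => ρ ω * Ystar ω) μ ∧
    (∫ ω, ρ ω * Ystar ω ∂μ) = -y ∧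
    emg μ Ystar αstar = 1 ∧
    (∀ Y : Ω → ℝ, Integrable Y μ → Integrable (fun ω => ρ ω * Y ω) μ →
      (∫ ω, ρ ω * Y ω ∂μ) = -y → ∀ α : ℝ, αstar < α → 1 < emg μ Y α) ∧
    dualityIndex μ Ystar = ENNReal.ofReal (y / H) ∧
    (∀ Y : Ω → ℝ, Integrable Y μ → Integrable (fun ω => ρ ω * Y ω) μ →
      (∫ ω, ρ ω * Y ω ∂μ) = -y → dualityIndex μ Ystar ≤ dualityIndex μ Y) := by
  intro H Ystar αstar
  have hH : 0 < H := hentpos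
  have hHne : H ≠ 0 := ne_of_gt hH
  have hyne : y ≠ 0 := ne_of_gt hy
  have hαpos : 0 < αstar := div_pos hH hy
  have e1 : (fun ω => ρ ω * Ystar ω) = fun ω => (-y / H) * (ρ ω * Real.log (ρ ω)) := by
    funext ω; simp only [Ystar]; ring
  have int1 : Integrable (fun ω => ρ ω * Ystar ω) μ := by
    rw [e1]; exact hent.const_mul _
  have int2 : ∫ ω, ρ ω * Ystar ω ∂μ = -y := by
    rw [e1, integral_const_mul]
    show -y / H * H = -y
    field_simp
  have emg1 : emg μ Ystar αstar = 1 := by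
    have hexp : ∀ᵐ ω ∂μ,
        ENNReal.ofReal (Real.exp (-αstar * Ystar ω)) = ENNReal.ofReal (ρ ω) := by
      filter_upwards [hρpos] with ω hω
      congr 1
      have harg : -αstar * Ystar ω = Real.log (ρ ω) := by
        show -(H / y) * (-y * Real.log (ρ ω) / H) = Real.log (ρ ω)
        field_simp
      rw [harg, Real.exp_log hω]
    unfold emg
    rw [lintegral_congr_ae hexp,
      ← ofReal_integral_eq_lintegral_ofReal hρint (hρpos.mono fun ω h => h.le), hρ1,
      ENNReal.ofReal_one]
  have key : ∀ Y : Ω → ℝ, Integrable (fun ω => ρ ω * Y ω) μ →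
      (∫ ω, ρ ω * Y ω ∂μ) = -y → ∀ α : ℝ, αstar < α → 1 < emg μ Y α :=
    fun Y hρY hb α hα => emg_key μ ρ hρpos hρint hρ1 hent y hy Y hρY hb α hα
  have hbound : ∀ Y : Ω → ℝ, Integrable (fun ω => ρ ω * Y ω) μ →
      (∫ ω, ρ ω * Y ω ∂μ) = -y → alphaHat μ Y ≤ ENNReal.ofReal αstar := by
    intro Y hρY hb
    apply sSup_le
    rintro _ ⟨a, ⟨ha0, hale⟩, rfl⟩
    apply ENNReal.ofReal_le_ofReal
    by_contra hlt
    push_neg at hlt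
    exact absurd hale (not_le.mpr (key Y hρY hb a hlt))
  have hsup : alphaHat μ Ystar = ENNReal.ofReal αstar :=
    le_antisymm (hbound Ystar int1 int2)
      (le_sSup ⟨αstar, ⟨hαpos.le, le_of_eq emg1⟩, rfl⟩)
  have hdual : dualityIndex μ Ystar = ENNReal.ofReal (y / H) := by
    unfold dualityIndex
    rw [hsup, ← ENNReal.ofReal_inv_of_pos hαpos]
    congr 1
    rw [show αstar = H / y from rfl, inv_div]
  refine ⟨int1, int2, emg1, fun Y _ h2 h3 => key Y h2 h3, hdual, ?_⟩
  intro Y hY hρY hb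
  show (alphaHat μ Ystar)⁻¹ ≤ (alphaHat μ Y)⁻¹
  rw [hsup]
  exact ENNReal.inv_le_inv.mpr (hbound Y hρY hb)
end
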